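/- (§4.4, stability forces the five smallest points to be consecutive vertices in type E₈.) Let (V₀, …, V₂₉) be a stable 30-gon of type E8 with inner points W_j. Then there exists m ∈ ℤ/30 such that each of V_m, V_{m+1}, V_{m+2}, V_{m+3}, V_{m+4} is smaller, in the order on ℂ, than every W_k (k ∈ ℤ/30) and than every V_i with i ∉ {m, m+1, m+2, m+3, m+4}. In particular, the five smallest of the 60 points {V_j} ∪ {W_j} are five consecutive vertices of the 30-gon. -/

import Mathlib

noncomputable section

/-- The (strict) total order on `ℂ`: compare imaginary parts first, then real parts. -/
def cLt (a b : ℂ) : Prop := a.im < b.im ∨ (a.im = b.im ∧ a.re < b.re)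

/-- The corresponding non-strict order on `ℂ`. -/
def cLe (a b : ℂ) : Prop := cLt a b ∨ a = b

/-- `cross u v = Im (conj u * v)`. -/
def cross (u v : ℂ) : ℝ := ((starRingEnd ℂ) u * v).im

/-- A positively convex `h`-gon: every other vertex lies strictly to the left of each
directed edge from `V (j-1)` to `V j`. -/
def PosConvex {h : ℕ} (V : ZMod h → ℂ) : Prop :=
  ∀ j i : ZMod h, i ≠ j - 1 → i ≠ j →
    0 < cross (V j - V (j - 1)) (V i - V (j - 1))

/-- The (open) level-`s` diagonal-gon of an `h`-gon. -/
def DiagGon {h : ℕ} (V : ZMod h → ℂ) (s : ℕ) : Set ℂ :=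
  {P : ℂ | ∀ j : ZMod h, 0 < cross (V (j + (s : ZMod h)) - V j) (P - V j)}

/-- Edge vectors of an `h`-gon. -/
def zEdge {h : ℕ} (V : ZMod h → ℂ) (j : ZMod h) : ℂ := V j - V (j - 1)

/-- A 30-gon of type E8. -/
def IsE8Gon (V : ZMod 30 → ℂ) : Prop :=
  (∀ j : ZMod 30, V (j + 15) = -V j) ∧
  (∀ j : ZMod 30, zEdge V j + zEdge V (j + 10) + zEdge V (j + 20) = 0) ∧
  (∀ j : ZMod 30,
    zEdge V j + zEdge V (j + 6) + zEdge V (j + 12) + zEdge V (j + 18) + zEdge V (j + 24) = 0)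

/-- The inner points `W j` of a 30-gon of type E8. -/
def WE8 (V : ZMod 30 → ℂ) (j : ZMod 30) : ℂ := V (j + 1) + zEdge V (j + 11)

/-- A stable 30-gon of type E8. -/
def IsStableE8Gon (V : ZMod 30 → ℂ) : Prop :=
  IsE8Gon V ∧ PosConvex V ∧ ∀ j : ZMod 30, WE8 V j ∈ DiagGon V 5

lemma cross_def (u v : ℂ) : cross u v = u.re * v.im - u.im * v.re := by
  simp [cross, Complex.mul_im]; ring
lemma cx_self (u : ℂ) : cross u u = 0 := by rw [cross_def]; ring
lemma cx_zero (v : ℂ) : cross 0 v = 0 := by rw [cross_def]; simp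
lemma cx_zero' (v : ℂ) : cross v 0 = 0 := by rw [cross_def]; simp
lemma cross_sub_right (u v w : ℂ) : cross u (v - w) = cross u v - cross u w := by
  simp only [cross_def, Complex.sub_re, Complex.sub_im]; ring
lemma cross_add_right (u v w : ℂ) : cross u (v + w) = cross u v + cross u w := by
  simp only [cross_def, Complex.add_re, Complex.add_im]; ring
lemma cross_smul_right (u v : ℂ) (t : ℝ) : cross u ((t:ℂ) * v) = t * cross u v := by
  simp only [cross_def, Complex.mul_re, Complex.mul_im, Complex.ofReal_re, Complex.ofReal_im]; ring
lemma cross_cyc (a b c : ℂ) : cross (b - a) (c - a) = cross (c - b) (a - b) := by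
  simp only [cross_def, Complex.sub_re, Complex.sub_im]; ring
lemma cross_swap' (a b c : ℂ) : cross (b - a) (c - a) = - cross (a - b) (c - b) := by
  simp only [cross_def, Complex.sub_re, Complex.sub_im]; ring
lemma bary (A B C X : ℂ) :
    (cross (C - B) (X - B) : ℂ) * (A - X) + (cross (A - C) (X - C) : ℂ) * (B - X)
      + (cross (B - A) (X - A) : ℂ) * (C - X) = 0 := by
  apply Complex.ext <;>
    simp only [cross_def, Complex.add_re, Complex.add_im, Complex.mul_re, Complex.mul_im,
      Complex.sub_re, Complex.sub_im, Complex.ofReal_re, Complex.ofReal_im, Complex.zero_re,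
      Complex.zero_im] <;> ring

lemma convex_lt {a b c t : ℝ} (ha : a < c) (hb : b < c) (h0 : 0 ≤ t) (h1 : t ≤ 1) :
    a + t * (b - a) < c := by
  rcases le_total a b with h | h
  · nlinarith [mul_nonneg (sub_nonneg.2 h1) (sub_nonneg.2 h)]
  · nlinarith [mul_nonneg h0 (sub_nonneg.2 h)]

lemma convex_le {a b c t : ℝ} (ha : a ≤ c) (hb : b ≤ c) (h0 : 0 ≤ t) (h1 : t ≤ 1) :
    a + t * (b - a) ≤ c := by
  rcases le_total a b with h | h
  · nlinarith [mul_nonneg (sub_nonneg.2 h1) (sub_nonneg.2 h)]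
  · nlinarith [mul_nonneg h0 (sub_nonneg.2 h)]

lemma convex_lt' {a b c t : ℝ} (ha : c < a) (hb : c < b) (h0 : 0 ≤ t) (h1 : t ≤ 1) :
    c < a + t * (b - a) := by
  have := convex_lt (a := -a) (b := -b) (c := -c) (by linarith) (by linarith) h0 h1
  linarith

lemma convex_le' {a b c t : ℝ} (ha : c ≤ a) (hb : c ≤ b) (h0 : 0 ≤ t) (h1 : t ≤ 1) :
    c ≤ a + t * (b - a) := by
  have := convex_le (a := -a) (b := -b) (c := -c) (by linarith) (by linarith) h0 h1
  linarith

lemma not_cLt_iff {a b : ℂ} : ¬ cLt a b ↔ (b.im < a.im ∨ (b.im = a.im ∧ b.re ≤ a.re)) := by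
  simp only [cLt, not_or, not_and, not_lt]
  constructor
  · rintro ⟨h1, h2⟩
    rcases lt_or_eq_of_le h1 with h | h
    · exact Or.inl h
    · exact Or.inr ⟨h, h2 h.symm⟩
  · rintro (h | ⟨h1, h2⟩)
    · exact ⟨le_of_lt h, fun he => absurd he (by linarith)⟩
    · exact ⟨le_of_eq h1, fun _ => h2⟩

/-- convexity of the strict sublevel region -/
lemma cvx_lt {x y X : ℂ} {t : ℝ} (hx : cLt x X) (hy : cLt y X) (h0 : 0 ≤ t) (h1 : t ≤ 1) :
    cLt (x + (t : ℂ) * (y - x)) X := by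
  have hzim : (x + (t : ℂ) * (y - x)).im = x.im + t * (y.im - x.im) := by
    simp [Complex.add_im, Complex.mul_im, Complex.sub_im, Complex.sub_re]
  have hzre : (x + (t : ℂ) * (y - x)).re = x.re + t * (y.re - x.re) := by
    simp [Complex.add_re, Complex.mul_re, Complex.sub_im, Complex.sub_re]
  rcases hx with hx | ⟨hx1, hx2⟩ <;> rcases hy with hy | ⟨hy1, hy2⟩
  · exact Or.inl (by rw [hzim]; exact convex_lt hx hy h0 h1)
  · rcases lt_or_eq_of_le h1 with h1' | h1'
    · left; rw [hzim, hy1]; nlinarith [mul_pos (sub_pos.2 h1') (sub_pos.2 hx)]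
    · subst h1'
      right
      exact ⟨by rw [hzim, hy1]; ring, by rw [hzre]; linarith [hy2]⟩
  · rcases lt_or_eq_of_le h0 with h0' | h0'
    · left; rw [hzim, hx1]; nlinarith [mul_pos h0' (sub_pos.2 hy)]
    · subst h0'
      right
      exact ⟨by rw [hzim, hx1]; ring, by rw [hzre]; linarith [hx2]⟩
  · right
    constructor
    · rw [hzim, hx1, hy1]; ring
    · rw [hzre]; exact convex_lt hx2 hy2 h0 h1

/-- convexity of the complement -/
lemma cvx_nlt {x y X : ℂ} {t : ℝ} (hx : ¬ cLt x X) (hy : ¬ cLt y X) (h0 : 0 ≤ t) (h1 : t ≤ 1) :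
    ¬ cLt (x + (t : ℂ) * (y - x)) X := by
  rw [not_cLt_iff] at *
  have hzim : (x + (t : ℂ) * (y - x)).im = x.im + t * (y.im - x.im) := by
    simp [Complex.add_im, Complex.mul_im, Complex.sub_im, Complex.sub_re]
  have hzre : (x + (t : ℂ) * (y - x)).re = x.re + t * (y.re - x.re) := by
    simp [Complex.add_re, Complex.mul_re, Complex.sub_im, Complex.sub_re]
  rcases hx with hx | ⟨hx1, hx2⟩ <;> rcases hy with hy | ⟨hy1, hy2⟩
  · left; rw [hzim]; exact convex_lt' hx hy h0 h1
  · rcases lt_or_eq_of_le h1 with h1' | h1'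
    · left; rw [hzim, hy1]; nlinarith [mul_pos (sub_pos.2 h1') (sub_pos.2 hx)]
    · subst h1'
      right
      exact ⟨by rw [hzim, hy1]; ring, by rw [hzre]; linarith [hy2]⟩
  · rcases lt_or_eq_of_le h0 with h0' | h0'
    · left; rw [hzim, hx1]; nlinarith [mul_pos h0' (sub_pos.2 hy)]
    · subst h0'
      right
      exact ⟨by rw [hzim, hx1]; ring, by rw [hzre]; linarith [hx2]⟩
  · right
    constructor
    · rw [hzim, ← hy1, hx1]; ring
    · rw [hzre]; exact convex_le' hx2 hy2 h0 h1

/-- collinearity: if cross d v = 0 and d ≠ 0 then v is a real multiple of d -/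
lemma collinear_of_cross_eq_zero {d v : ℂ} (h : cross d v = 0) (hd : d ≠ 0) :
    ∃ μ : ℝ, v = (μ : ℂ) * d := by
  rw [cross_def] at h
  have hd' : d.re ^ 2 + d.im ^ 2 ≠ 0 := by
    intro hz
    apply hd
    have h1 : d.re = 0 := by nlinarith [sq_nonneg d.re, sq_nonneg d.im]
    have h2 : d.im = 0 := by nlinarith [sq_nonneg d.re, sq_nonneg d.im]
    apply Complex.ext <;> simp [h1, h2]
  refine ⟨(d.re * v.re + d.im * v.im) / (d.re ^ 2 + d.im ^ 2), ?_⟩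
  apply Complex.ext
  · simp only [Complex.mul_re, Complex.mul_im, Complex.ofReal_re, Complex.ofReal_im]
    field_simp
    linear_combination (-(d.im : ℝ)) * h
  · simp only [Complex.mul_re, Complex.mul_im, Complex.ofReal_re, Complex.ofReal_im]
    field_simp
    linear_combination (d.re : ℝ) * h


lemma cast_sub30 {b : ℕ} (hb : b ≤ 30) : ((30 - b : ℕ) : ZMod 30) = -(b : ZMod 30) := by
  rw [Nat.cast_sub hb, ZMod.natCast_self]
  ring


lemma cLt_irrefl (a : ℂ) : ¬ cLt a a := by
  rintro (h | ⟨h1, h2⟩) <;> linarith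

lemma cLt_trans {a b c : ℂ} (h1 : cLt a b) (h2 : cLt b c) : cLt a c := by
  rcases h1 with h1 | ⟨h1, h1'⟩ <;> rcases h2 with h2 | ⟨h2, h2'⟩
  · exact Or.inl (lt_trans h1 h2)
  · exact Or.inl (by linarith)
  · exact Or.inl (by linarith)
  · exact Or.inr ⟨by linarith, by linarith⟩

lemma cLt_asymm {a b : ℂ} (h1 : cLt a b) : ¬ cLt b a := fun h2 => cLt_irrefl a (cLt_trans h1 h2)

lemma cLt_total {a b : ℂ} (h : a ≠ b) : cLt a b ∨ cLt b a := by
  rcases lt_trichotomy a.im b.im with h1 | h1 | h1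
  · exact Or.inl (Or.inl h1)
  · rcases lt_trichotomy a.re b.re with h2 | h2 | h2
    · exact Or.inl (Or.inr ⟨h1, h2⟩)
    · exact absurd (Complex.ext h2 h1) h
    · exact Or.inr (Or.inr ⟨h1.symm, h2⟩)
  · exact Or.inr (Or.inl h1)

lemma cLt_sub_iff {a b : ℂ} : cLt a b ↔ cLt 0 (b - a) := by
  simp only [cLt, Complex.sub_im, Complex.sub_re, Complex.zero_im, Complex.zero_re]
  constructor
  · rintro (h | ⟨h1, h2⟩)
    · left; linarith
    · right; constructor <;> linarith
  · rintro (h | ⟨h1, h2⟩)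
    · left; linarith
    · right; constructor <;> linarith

lemma cLt_zero_add {v w : ℂ} (hv : cLt 0 v) (hw : cLt 0 w) : cLt 0 (v + w) := by
  simp only [cLt, Complex.add_im, Complex.add_re, Complex.zero_im, Complex.zero_re] at *
  rcases hv with h | ⟨h1, h2⟩ <;> rcases hw with h' | ⟨h1', h2'⟩
  · left; linarith
  · left; linarith
  · left; linarith
  · right; constructor <;> linarith

lemma cLt_zero_smul {v : ℂ} {t : ℝ} (ht : 0 < t) (hv : cLt 0 v) : cLt 0 ((t : ℂ) * v) := by
  simp only [cLt, Complex.mul_im, Complex.mul_re, Complex.ofReal_re, Complex.ofReal_im,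
    Complex.zero_im, Complex.zero_re] at *
  rcases hv with h | ⟨h1, h2⟩
  · left; nlinarith
  · right; constructor
    · rw [← h1]; ring
    · nlinarith

lemma wedge {d1 d2 u : ℂ} (hD : 0 < cross d1 d2) (h1 : 0 < cross d1 u) (h2 : 0 < cross d2 u)
    (hp2 : cLt 0 d2) (hp1 : cLt 0 (-d1)) : cLt 0 u := by
  have key : u = ((cross d2 u / cross d1 d2 : ℝ) : ℂ) * (-d1)
      + ((cross d1 u / cross d1 d2 : ℝ) : ℂ) * d2 := by
    have hD' : d1.re * d2.im - d1.im * d2.re ≠ 0 := by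
      rw [cross_def] at hD; exact ne_of_gt hD
    have hD'' : d2.im * d1.re - d2.re * d1.im ≠ 0 := by
      intro h; apply hD'; linarith
    apply Complex.ext <;>
      · simp only [cross_def, Complex.add_re, Complex.add_im, Complex.mul_re, Complex.mul_im,
          Complex.neg_re, Complex.neg_im, Complex.ofReal_re, Complex.ofReal_im]
        field_simp
        ring
  rw [key]
  exact cLt_zero_add (cLt_zero_smul (by positivity) hp1) (cLt_zero_smul (by positivity) hp2)

lemma zcongr (x : ZMod 30) {u v : ℕ} (h : u % 30 = v % 30) :
    x + (u : ZMod 30) = x + (v : ZMod 30) := by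
  rw [← ZMod.natCast_mod u 30, ← ZMod.natCast_mod v 30, h]

lemma zassoc (x : ZMod 30) (u v : ℕ) :
    (x + (u : ZMod 30)) + (v : ZMod 30) = x + ((u + v : ℕ) : ZMod 30) := by
  push_cast; ring

section Poly
variable {V : ZMod 30 → ℂ} (hc : PosConvex V)

lemma ne_helper (j : ZMod 30) {a b : ℕ} (ha : a < 30) (hb : b < 30) (h : a ≠ b) :
    j + (a : ZMod 30) ≠ j + (b : ZMod 30) := by
  intro he
  apply h
  have h2 : (a : ZMod 30) = (b : ZMod 30) := by
    have := congrArg (fun x => x - j) he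
    simpa using this
  have h3 := congrArg ZMod.val h2
  rwa [ZMod.val_cast_of_lt ha, ZMod.val_cast_of_lt hb] at h3

include hc

lemma PC (j : ZMod 30) {i : ZMod 30} (h1 : i ≠ j) (h2 : i ≠ j + 1) :
    0 < cross (V (j + 1) - V j) (V i - V j) := by
  have h := hc (j + 1) i (by simpa using h1) h2
  simpa using h

lemma Vne {i k : ZMod 30} (h : i ≠ k) : V i ≠ V k := by
  intro he
  by_cases h1 : i = k - 1
  · have hz : V k - V (k - 1) = 0 := by rw [← h1, he]; ring
    have h3 := hc k (k + 1) ?_ (by simp; decide)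
    · rw [hz, cx_zero] at h3; exact lt_irrefl 0 h3
    · intro h4
      have h5 : (1 : ZMod 30) = -1 := by
        have := congrArg (fun x => x - k) h4
        simpa [sub_eq_add_neg] using this
      exact absurd h5 (by decide)
  · have h3 := hc k i h1 h
    rw [he, cx_self] at h3
    exact lt_irrefl 0 h3

lemma chord : ∀ s : ℕ, 1 ≤ s → ∀ r : ℕ, s < r → r ≤ 29 → ∀ j : ZMod 30,
    0 < cross (V (j + (s : ZMod 30)) - V j) (V (j + (r : ZMod 30)) - V j) := by
  intro s hs
  induction s, hs using Nat.le_induction with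
  | base =>
    intro r hr hr29 j
    have hne1 : j + (r : ZMod 30) ≠ j := by
      have := ne_helper j (a := r) (b := 0) (by omega) (by omega) (by omega)
      simpa using this
    have hne2 : j + (r : ZMod 30) ≠ j + 1 := by
      have := ne_helper j (a := r) (b := 1) (by omega) (by omega) (by omega)
      simpa using this
    have h := PC hc j hne1 hne2
    simpa using h
  | succ s hs IH =>
    intro r hr hr29 j
    by_cases hbad : s + 1 = 28 ∧ r = 29
    · obtain ⟨hb1, hb2⟩ := hbad
      subst hb2
      rw [hb1, cross_cyc]
      have h28 : (j + ((28 : ℕ) : ZMod 30)) + 1 = j + ((29 : ℕ) : ZMod 30) := by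
        push_cast; ring
      have hne1 : j ≠ j + ((28 : ℕ) : ZMod 30) := by
        have := ne_helper j (a := 0) (b := 28) (by omega) (by omega) (by omega)
        simpa using this
      have hne2 : j ≠ (j + ((28 : ℕ) : ZMod 30)) + 1 := by
        rw [h28]
        have := ne_helper j (a := 0) (b := 29) (by omega) (by omega) (by omega)
        simpa using this
      have h := PC hc (j + ((28 : ℕ) : ZMod 30)) hne1 hne2
      rw [h28] at h
      exact h
    · have hsr : s < r := by omega
      set A := V j with hA
      set B := V (j + ((s : ℕ) : ZMod 30)) with hB
      set C := V (j + (((s + 1 : ℕ)) : ZMod 30)) with hC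
      set X := V (j + ((r : ℕ) : ZMod 30)) with hX
      have h1 : 0 < cross (B - A) (X - A) := IH r hsr hr29 j
      have hcast : (j + ((s : ℕ) : ZMod 30)) + 1 = j + ((s + 1 : ℕ) : ZMod 30) := by
        push_cast; ring
      have h3 : 0 < cross (C - B) (X - B) := by
        have hne1 : j + ((r : ℕ) : ZMod 30) ≠ j + ((s : ℕ) : ZMod 30) :=
          ne_helper j (by omega) (by omega) (by omega)
        have hne2 : j + ((r : ℕ) : ZMod 30) ≠ (j + ((s : ℕ) : ZMod 30)) + 1 := by
          rw [hcast]; exact ne_helper j (by omega) (by omega) (by omega)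
        have h := PC hc _ hne1 hne2
        rw [hcast] at h
        exact h
      have hw : ∃ w : ℂ, 0 < cross w (A - X) ∧ 0 < cross w (B - X) ∧ 0 < cross w (C - X) := by
        by_cases hr28 : r ≤ 28
        · have hcast2 : (j + ((r : ℕ) : ZMod 30)) + 1 = j + ((r + 1 : ℕ) : ZMod 30) := by
            push_cast; ring
          refine ⟨V ((j + ((r : ℕ) : ZMod 30)) + 1) - V (j + ((r : ℕ) : ZMod 30)), ?_, ?_, ?_⟩
          · refine PC hc _ ?_ ?_
            · have := ne_helper j (a := 0) (b := r) (by omega) (by omega) (by omega)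
              simpa using this
            · rw [hcast2]
              have := ne_helper j (a := 0) (b := r + 1) (by omega) (by omega) (by omega)
              simpa using this
          · refine PC hc _ ?_ ?_
            · exact ne_helper j (by omega) (by omega) (by omega)
            · rw [hcast2]; exact ne_helper j (by omega) (by omega) (by omega)
          · refine PC hc _ ?_ ?_
            · exact ne_helper j (by omega) (by omega) (by omega)
            · rw [hcast2]; exact ne_helper j (by omega) (by omega) (by omega)
        · have hr29' : r = 29 := by omega
          subst hr29'
          have hs26 : s ≤ 26 := by
            rcases Nat.lt_or_ge s 27 with h | h
            · omega
            · exact absurd ⟨by omega, rfl⟩ hbad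
          set w := V (j + ((29 : ℕ) : ZMod 30)) - V (j + ((28 : ℕ) : ZMod 30)) with hwdef
          have hcast3 : (j + ((28 : ℕ) : ZMod 30)) + 1 = j + ((29 : ℕ) : ZMod 30) := by
            push_cast; ring
          have hXw : X - V (j + ((28 : ℕ) : ZMod 30)) = w := by rw [hwdef, hX]
          have hPC : ∀ i : ZMod 30, i ≠ j + ((28 : ℕ) : ZMod 30) →
              i ≠ j + ((29 : ℕ) : ZMod 30) → 0 < cross w (V i - X) := by
            intro i hi1 hi2
            have h := PC hc (j + ((28 : ℕ) : ZMod 30)) (i := i) hi1 (by rw [hcast3]; exact hi2)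
            rw [hcast3] at h
            have heq : V i - X = (V i - V (j + ((28 : ℕ) : ZMod 30)))
                - (X - V (j + ((28 : ℕ) : ZMod 30))) := by ring
            rw [heq, hXw, cross_sub_right, cx_self]
            linarith
          refine ⟨w, ?_, ?_, ?_⟩
          · refine hPC j ?_ ?_
            · have := ne_helper j (a := 0) (b := 28) (by omega) (by omega) (by omega)
              simpa using this
            · have := ne_helper j (a := 0) (b := 29) (by omega) (by omega) (by omega)
              simpa using this
          · exact hPC _ (ne_helper j (by omega) (by omega) (by omega))
              (ne_helper j (by omega) (by omega) (by omega))
          · exact hPC _ (ne_helper j (by omega) (by omega) (by omega))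
              (ne_helper j (by omega) (by omega) (by omega))
      obtain ⟨w, hwA, hwB, hwC⟩ := hw
      by_contra hcon
      push_neg at hcon
      have hlB : 0 ≤ cross (A - C) (X - C) := by
        have := cross_swap' A C X
        linarith
      have hkey := congrArg (cross w) (bary A B C X)
      rw [cross_add_right, cross_add_right, cross_smul_right, cross_smul_right,
        cross_smul_right, cx_zero'] at hkey
      nlinarith [mul_pos h3 hwA, mul_nonneg hlB hwB.le, mul_pos h1 hwC]


lemma interleave {X : ℂ} (p : ZMod 30) {a b c : ℕ} (h0a : 0 < a) (hab : a < b) (hbc : b < c)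
    (hc30 : c < 30) (hp : cLt (V p) X) (hq : cLt (V (p + (b : ZMod 30))) X)
    (hr : ¬ cLt (V (p + (a : ZMod 30))) X) (hs : ¬ cLt (V (p + (c : ZMod 30))) X) : False := by
  set P := V p with hP
  set R := V (p + (a : ZMod 30)) with hR
  set Q := V (p + (b : ZMod 30)) with hQ
  set S := V (p + (c : ZMod 30)) with hS
  set d := Q - P with hd
  set e := S - R with he
  -- A1 : cross d (R - P) < 0
  have hA1 : cross d (R - P) < 0 := by
    have h := chord hc (30 - b) (by omega) (30 - b + a) (by omega) (by omega) (p + (b : ZMod 30))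
    have e1 : p + (b : ZMod 30) + ((30 - b : ℕ) : ZMod 30) = p := by
      rw [cast_sub30 (b := b) (by omega)]; ring
    have e2 : p + (b : ZMod 30) + ((30 - b + a : ℕ) : ZMod 30) = p + (a : ZMod 30) := by
      rw [Nat.cast_add, cast_sub30 (b := b) (by omega)]; ring
    rw [e1, e2] at h
    have hsw := cross_swap' P Q R
    simp only [hP, hQ, hR, hd] at h hsw ⊢
    linarith
  have hB1 : 0 < cross d (S - P) := chord hc b (by omega) c hbc (by omega) p
  have hc1 : 0 < cross e (P - R) := by
    have h := chord hc (c - a) (by omega) (30 - a) (by omega) (by omega) (p + (a : ZMod 30))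
    have e1 : p + (a : ZMod 30) + ((c - a : ℕ) : ZMod 30) = p + (c : ZMod 30) := by
      rw [Nat.cast_sub (show a ≤ c by omega)]; ring
    have e2 : p + (a : ZMod 30) + ((30 - a : ℕ) : ZMod 30) = p := by
      rw [cast_sub30 (b := a) (by omega)]; ring
    rw [e1, e2] at h
    exact h
  have hc2 : cross e (Q - R) < 0 := by
    have h := chord hc (30 - c + a) (by omega) (30 - c + b) (by omega) (by omega)
      (p + (c : ZMod 30))
    have e1 : p + (c : ZMod 30) + ((30 - c + a : ℕ) : ZMod 30) = p + (a : ZMod 30) := by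
      rw [Nat.cast_add, cast_sub30 (b := c) (by omega)]; ring
    have e2 : p + (c : ZMod 30) + ((30 - c + b : ℕ) : ZMod 30) = p + (b : ZMod 30) := by
      rw [Nat.cast_add, cast_sub30 (b := c) (by omega)]; ring
    rw [e1, e2] at h
    have hsw := cross_swap' R S Q
    simp only [hP, hQ, hR, hS, he] at h hsw ⊢
    linarith
  have hdne : d ≠ 0 := by
    rw [hd]
    apply sub_ne_zero.2
    apply Vne hc
    have := ne_helper p (a := b) (b := 0) (by omega) (by omega) (by omega)
    simpa using this
  set a1 := cross d (R - P) with ha1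
  set b1 := cross d (S - P) with hb1
  set t := -a1 / (b1 - a1) with ht
  have hba : 0 < b1 - a1 := by linarith
  have ht0 : 0 ≤ t := by
    rw [ht]
    apply div_nonneg <;> linarith
  have ht1 : t ≤ 1 := by
    rw [ht, div_le_one hba]; linarith
  set Y := R + (t : ℂ) * (S - R) with hY
  have hYnlt : ¬ cLt Y X := cvx_nlt hr hs ht0 ht1
  have hcross0 : cross d (Y - P) = 0 := by
    have hYP : Y - P = (R - P) + (t : ℂ) * (S - R) := by rw [hY]; ring
    have hSR : cross d (S - R) = b1 - a1 := by
      have : S - R = (S - P) - (R - P) := by ring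
      rw [this, cross_sub_right, ← hb1, ← ha1]
    rw [hYP, cross_add_right, cross_smul_right, hSR, ← ha1, ht]
    field_simp
    ring
  obtain ⟨μ, hμ⟩ := collinear_of_cross_eq_zero hcross0 hdne
  set c1 := cross e (P - R) with hcc1
  set c2 := cross e (Q - R) with hcc2
  have hed : cross e d = c2 - c1 := by
    have : d = (Q - R) - (P - R) := by rw [hd]; ring
    rw [this, cross_sub_right, ← hcc1, ← hcc2]
  have hYR0 : cross e (Y - R) = 0 := by
    have : Y - R = (t : ℂ) * e := by rw [hY, he]; ring
    rw [this, cross_smul_right, cx_self, mul_zero]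
  have hμeq : μ * (c1 - c2) = c1 := by
    have hYR : Y - R = (μ : ℂ) * d + (P - R) := by
      have : Y - R = (Y - P) + (P - R) := by ring
      rw [this, hμ]
    rw [hYR, cross_add_right, cross_smul_right, hed, ← hcc1] at hYR0
    linarith
  have hc1c2 : 0 < c1 - c2 := by linarith
  have hμ0 : 0 ≤ μ := by nlinarith
  have hμ1 : μ ≤ 1 := by nlinarith
  have hYlt : cLt Y X := by
    have hYalt : Y = P + (μ : ℂ) * (Q - P) := by
      have : Y = P + (Y - P) := by ring
      rw [this, hμ, hd]
    rw [hYalt]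
    exact cvx_lt hp hq hμ0 hμ1
  exact hYnlt hYlt


lemma exists_min : ∃ n : ZMod 30, ∀ i : ZMod 30, i ≠ n → cLt (V n) (V i) := by
  obtain ⟨n, -, hn⟩ := Finset.exists_min_image Finset.univ
    (fun i : ZMod 30 => toLex ((V i).im, (V i).re)) ⟨0, Finset.mem_univ 0⟩
  refine ⟨n, fun i hi => ?_⟩
  have hne : V i ≠ V n := Vne hc hi
  rcases cLt_total hne with h | h
  · exfalso
    have hlt : toLex ((V i).im, (V i).re) < toLex ((V n).im, (V n).re) := by
      rw [Prod.Lex.lt_iff]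
      exact h
    exact absurd (hn i (Finset.mem_univ i)) (not_le.2 hlt)
  · exact h

lemma inv_step (L : ℕ) (hL : L ≤ 27) (a : ZMod 30)
    (hI : ∀ t r : ℕ, t ≤ L → L < r → r ≤ 29 → cLt (V (a + (t : ZMod 30))) (V (a + (r : ZMod 30)))) :
    ∃ a' : ZMod 30, ∀ t r : ℕ, t ≤ L + 1 → L + 1 < r → r ≤ 29 →
      cLt (V (a' + (t : ZMod 30))) (V (a' + (r : ZMod 30))) := by
  have hPQne : a + ((29 : ℕ) : ZMod 30) ≠ a + ((L + 1 : ℕ) : ZMod 30) :=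
    ne_helper a (by omega) (by omega) (by omega)
  have ha0 : ∀ x : ZMod 30, x + ((0 : ℕ) : ZMod 30) = x := by intro x; simp
  rcases cLt_total (Vne hc hPQne) with hcase | hcase
  · -- the new smallest point is at a - 1
    refine ⟨a + ((29 : ℕ) : ZMod 30), fun t r ht hr hr29 => ?_⟩
    rw [zassoc, zassoc]
    rcases Nat.eq_zero_or_pos t with rfl | htpos
    · -- t = 0
      rw [zcongr a (u := 29 + 0) (v := 29) (by omega)]
      rw [zcongr a (u := 29 + r) (v := r - 1) (by omega)]
      rcases Nat.eq_or_lt_of_le (show L + 2 ≤ r by omega) with hrL | hrL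
      · have : r - 1 = L + 1 := by omega
        rw [this]
        exact hcase
      · by_contra hn
        have hne2 : a + ((r - 1 : ℕ) : ZMod 30) ≠ a + ((29 : ℕ) : ZMod 30) :=
          ne_helper a (by omega) (by omega) (by omega)
        have hq : cLt (V (a + ((r - 1 : ℕ) : ZMod 30))) (V (a + ((29 : ℕ) : ZMod 30))) := by
          rcases cLt_total (Vne hc hne2) with h | h
          · exact h
          · exact absurd h hn
        refine interleave hc (X := V (a + ((29 : ℕ) : ZMod 30))) a
          (a := L + 1) (b := r - 1) (c := 29) (by omega) (by omega) (by omega) (by omega)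
          ?_ hq (cLt_asymm hcase) (cLt_irrefl _)
        have := hI 0 29 (by omega) (by omega) (by omega)
        rwa [ha0] at this
    · -- t ≥ 1
      rw [zcongr a (u := 29 + t) (v := t - 1) (by omega)]
      rw [zcongr a (u := 29 + r) (v := r - 1) (by omega)]
      exact hI (t - 1) (r - 1) (by omega) (by omega) (by omega)
  · -- the new smallest point is at a + L + 1
    refine ⟨a, fun t r ht hr hr29 => ?_⟩
    rcases Nat.lt_or_ge t (L + 1) with htL | htL
    · exact hI t r (by omega) (by omega) hr29
    · have ht' : t = L + 1 := by omega
      subst ht'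
      rcases Nat.eq_or_lt_of_le hr29 with hr' | hr'
      · subst hr'
        exact hcase
      · by_contra hn
        have hne2 : a + ((r : ℕ) : ZMod 30) ≠ a + ((L + 1 : ℕ) : ZMod 30) :=
          ne_helper a (by omega) (by omega) (by omega)
        have hq : cLt (V (a + ((r : ℕ) : ZMod 30))) (V (a + ((L + 1 : ℕ) : ZMod 30))) := by
          rcases cLt_total (Vne hc hne2) with h | h
          · exact h
          · exact absurd h hn
        refine interleave hc (X := V (a + ((L + 1 : ℕ) : ZMod 30))) a
          (a := L + 1) (b := r) (c := 29) (by omega) (by omega) (by omega) (by omega)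
          ?_ hq (cLt_irrefl _) (cLt_asymm hcase)
        have := hI 0 (L + 1) (by omega) (by omega) (by omega)
        rwa [ha0] at this

lemma five_arc : ∃ m : ZMod 30, ∀ t r : ℕ, t ≤ 4 → 4 < r → r ≤ 29 →
    cLt (V (m + (t : ZMod 30))) (V (m + (r : ZMod 30))) := by
  obtain ⟨n, hn⟩ := exists_min hc
  have base : ∀ t r : ℕ, t ≤ 0 → 0 < r → r ≤ 29 →
      cLt (V (n + (t : ZMod 30))) (V (n + (r : ZMod 30))) := by
    intro t r ht hr hr29
    have ht0 : t = 0 := by omega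
    subst ht0
    have h1 : n + ((0 : ℕ) : ZMod 30) = n := by simp
    rw [h1]
    apply hn
    have := ne_helper n (a := r) (b := 0) (by omega) (by omega) (by omega)
    simpa using this
  obtain ⟨m1, h1⟩ := inv_step hc 0 (by omega) n base
  obtain ⟨m2, h2⟩ := inv_step hc 1 (by omega) m1 h1
  obtain ⟨m3, h3⟩ := inv_step hc 2 (by omega) m2 h2
  obtain ⟨m4, h4⟩ := inv_step hc 3 (by omega) m3 h3
  exact ⟨m4, h4⟩


lemma apex4 (m : ZMod 30)
    (hm : ∀ t r : ℕ, t ≤ 4 → 4 < r → r ≤ 29 →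
      cLt (V (m + (t : ZMod 30))) (V (m + (r : ZMod 30)))) (Wpt : ℂ)
    (hW : ∀ j : ZMod 30, 0 < cross (V (j + ((5 : ℕ) : ZMod 30)) - V j) (Wpt - V j)) :
    cLt (V (m + ((4 : ℕ) : ZMod 30))) Wpt := by
  set d1 : ℂ := V (m + ((4 : ℕ) : ZMod 30)) - V (m + ((29 : ℕ) : ZMod 30)) with hd1
  set d2 : ℂ := V (m + ((9 : ℕ) : ZMod 30)) - V (m + ((4 : ℕ) : ZMod 30)) with hd2
  have e1 : m + ((29 : ℕ) : ZMod 30) + ((5 : ℕ) : ZMod 30) = m + ((4 : ℕ) : ZMod 30) := by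
    rw [zassoc]; exact zcongr m (by omega)
  have e2 : m + ((29 : ℕ) : ZMod 30) + ((10 : ℕ) : ZMod 30) = m + ((9 : ℕ) : ZMod 30) := by
    rw [zassoc]; exact zcongr m (by omega)
  have e3 : m + ((4 : ℕ) : ZMod 30) + ((5 : ℕ) : ZMod 30) = m + ((9 : ℕ) : ZMod 30) := by
    rw [zassoc]
  have hch := chord hc 5 (by omega) 10 (by omega) (by omega) (m + ((29 : ℕ) : ZMod 30))
  rw [e1, e2] at hch
  have hd12 : 0 < cross d1 d2 := by
    have hsplit : d2 = (V (m + ((9 : ℕ) : ZMod 30)) - V (m + ((29 : ℕ) : ZMod 30))) - d1 := by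
      rw [hd1, hd2]; ring
    rw [hsplit, cross_sub_right, cx_self]
    linarith
  have hp2 : cLt 0 d2 := by
    rw [hd2, ← cLt_sub_iff]
    exact hm 4 9 (by omega) (by omega) (by omega)
  have hp1 : cLt 0 (-d1) := by
    rw [hd1, neg_sub, ← cLt_sub_iff]
    exact hm 4 29 (by omega) (by omega) (by omega)
  have hw1 : 0 < cross d1 (Wpt - V (m + ((4 : ℕ) : ZMod 30))) := by
    have h := hW (m + ((29 : ℕ) : ZMod 30))
    rw [e1] at h
    have hsplit : Wpt - V (m + ((4 : ℕ) : ZMod 30))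
        = (Wpt - V (m + ((29 : ℕ) : ZMod 30))) - d1 := by rw [hd1]; ring
    rw [hsplit, cross_sub_right, cx_self]
    linarith
  have hw2 : 0 < cross d2 (Wpt - V (m + ((4 : ℕ) : ZMod 30))) := by
    have h := hW (m + ((4 : ℕ) : ZMod 30))
    rw [e3] at h
    exact h
  rw [cLt_sub_iff]
  exact wedge hd12 hw1 hw2 hp2 hp1

lemma apex0 (m : ZMod 30)
    (hm : ∀ t r : ℕ, t ≤ 4 → 4 < r → r ≤ 29 →
      cLt (V (m + (t : ZMod 30))) (V (m + (r : ZMod 30)))) (Wpt : ℂ)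
    (hW : ∀ j : ZMod 30, 0 < cross (V (j + ((5 : ℕ) : ZMod 30)) - V j) (Wpt - V j)) :
    cLt (V m) Wpt := by
  have ha0 : m + ((0 : ℕ) : ZMod 30) = m := by simp
  set d1 : ℂ := V m - V (m + ((25 : ℕ) : ZMod 30)) with hd1
  set d2 : ℂ := V (m + ((5 : ℕ) : ZMod 30)) - V m with hd2
  have e1 : m + ((25 : ℕ) : ZMod 30) + ((5 : ℕ) : ZMod 30) = m := by
    rw [zassoc, zcongr m (u := 25 + 5) (v := 0) (by omega)]
    exact ha0
  have e2 : m + ((25 : ℕ) : ZMod 30) + ((10 : ℕ) : ZMod 30) = m + ((5 : ℕ) : ZMod 30) := by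
    rw [zassoc]; exact zcongr m (by omega)
  have hch := chord hc 5 (by omega) 10 (by omega) (by omega) (m + ((25 : ℕ) : ZMod 30))
  rw [e1, e2] at hch
  have hd12 : 0 < cross d1 d2 := by
    have hsplit : d2 = (V (m + ((5 : ℕ) : ZMod 30)) - V (m + ((25 : ℕ) : ZMod 30))) - d1 := by
      rw [hd1, hd2]; ring
    rw [hsplit, cross_sub_right, cx_self]
    linarith
  have hp2 : cLt 0 d2 := by
    rw [hd2, ← cLt_sub_iff]
    have := hm 0 5 (by omega) (by omega) (by omega)
    rwa [ha0] at this
  have hp1 : cLt 0 (-d1) := by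
    rw [hd1, neg_sub, ← cLt_sub_iff]
    have := hm 0 25 (by omega) (by omega) (by omega)
    rwa [ha0] at this
  have hw1 : 0 < cross d1 (Wpt - V m) := by
    have h := hW (m + ((25 : ℕ) : ZMod 30))
    rw [e1] at h
    have hsplit : Wpt - V m = (Wpt - V (m + ((25 : ℕ) : ZMod 30))) - d1 := by rw [hd1]; ring
    rw [hsplit, cross_sub_right, cx_self]
    linarith
  have hw2 : 0 < cross d2 (Wpt - V m) := hW m
  rw [cLt_sub_iff]
  exact wedge hd12 hw1 hw2 hp2 hp1

lemma no_interior_max (m : ZMod 30)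
    (hm : ∀ t r : ℕ, t ≤ 4 → 4 < r → r ≤ 29 →
      cLt (V (m + (t : ZMod 30))) (V (m + (r : ZMod 30)))) (t : ℕ) (h1 : 1 ≤ t) (h3 : t ≤ 3)
    (h0 : cLt (V (m + ((0 : ℕ) : ZMod 30))) (V (m + (t : ZMod 30))))
    (h4 : cLt (V (m + ((4 : ℕ) : ZMod 30))) (V (m + (t : ZMod 30)))) : False := by
  have ha0 : m + ((0 : ℕ) : ZMod 30) = m := by simp
  refine interleave hc (X := V (m + (t : ZMod 30))) m (a := t) (b := 4) (c := 10)
    (by omega) (by omega) (by omega) (by omega) ?_ h4 (cLt_irrefl _) ?_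
  · rwa [ha0] at h0
  · exact cLt_asymm (hm t 10 (by omega) (by omega) (by omega))

end Poly


/-- (§4.4.) In a stable 30-gon of type `E8`, the five smallest of the 60 points
`{V j} ∪ {W j}` are five consecutive vertices. -/
theorem e8_five_smallest_consecutive (V : ZMod 30 → ℂ) (hV : IsStableE8Gon V) :
    ∃ m : ZMod 30, ∀ t : ZMod 30,
      t ∈ ({m, m + 1, m + 2, m + 3, m + 4} : Set (ZMod 30)) →
      (∀ k : ZMod 30, cLt (V t) (WE8 V k)) ∧
      (∀ i : ZMod 30, i ∉ ({m, m + 1, m + 2, m + 3, m + 4} : Set (ZMod 30)) →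
        cLt (V t) (V i)) := by
  obtain ⟨hE8, hconv, hdiag⟩ := hV
  have hdg : ∀ k : ZMod 30, ∀ j : ZMod 30,
      0 < cross (V (j + ((5 : ℕ) : ZMod 30)) - V j) (WE8 V k - V j) := fun k j => hdiag k j
  obtain ⟨m, hm⟩ := five_arc hconv
  have h04ne : m + ((0 : ℕ) : ZMod 30) ≠ m + ((4 : ℕ) : ZMod 30) :=
    ne_helper m (by omega) (by omega) (by omega)
  have ha0 : m + ((0 : ℕ) : ZMod 30) = m := by simp
  have main : ∀ tn : ℕ, tn ≤ 4 → ∀ k : ZMod 30, cLt (V (m + (tn : ZMod 30))) (WE8 V k) := by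
    rcases cLt_total (Vne hconv h04ne) with hA | hA
    · have hmax : ∀ tn : ℕ, tn ≤ 4 → tn ≠ 4 →
          cLt (V (m + (tn : ZMod 30))) (V (m + ((4 : ℕ) : ZMod 30))) := by
        intro tn h4 hne
        rcases Nat.eq_zero_or_pos tn with rfl | hpos
        · exact hA
        · by_contra hn
          have hnei : m + ((tn : ℕ) : ZMod 30) ≠ m + ((4 : ℕ) : ZMod 30) :=
            ne_helper m (by omega) (by omega) (by omega)
          have hlt : cLt (V (m + ((4 : ℕ) : ZMod 30))) (V (m + (tn : ZMod 30))) := by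
            rcases cLt_total (Vne hconv hnei) with h | h
            · exact absurd h hn
            · exact h
          exact no_interior_max hconv m hm tn (by omega) (by omega) (cLt_trans hA hlt) hlt
      intro tn h4 k
      have happ := apex4 hconv m hm (WE8 V k) (hdg k)
      rcases Nat.eq_or_lt_of_le h4 with h | h
      · subst h
        exact happ
      · exact cLt_trans (hmax tn (by omega) (by omega)) happ
    · have hmax : ∀ tn : ℕ, 1 ≤ tn → tn ≤ 4 →
          cLt (V (m + (tn : ZMod 30))) (V (m + ((0 : ℕ) : ZMod 30))) := by
        intro tn h1 h4
        rcases Nat.eq_or_lt_of_le h4 with h | h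
        · subst h
          exact hA
        · by_contra hn
          have hnei : m + ((0 : ℕ) : ZMod 30) ≠ m + ((tn : ℕ) : ZMod 30) :=
            ne_helper m (by omega) (by omega) (by omega)
          have hlt : cLt (V (m + ((0 : ℕ) : ZMod 30))) (V (m + (tn : ZMod 30))) := by
            rcases cLt_total (Vne hconv hnei) with h' | h'
            · exact h'
            · exact absurd h' hn
          exact no_interior_max hconv m hm tn h1 (by omega) hlt (cLt_trans hA hlt)
      intro tn h4 k
      have happ := apex0 hconv m hm (WE8 V k) (hdg k)
      rcases Nat.eq_zero_or_pos tn with rfl | hpos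
      · rw [ha0]
        exact happ
      · refine cLt_trans ?_ happ
        have := hmax tn hpos h4
        rwa [ha0] at this
  refine ⟨m, fun t htmem => ?_⟩
  have hex : ∃ tn : ℕ, tn ≤ 4 ∧ t = m + (tn : ZMod 30) := by
    simp only [Set.mem_insert_iff, Set.mem_singleton_iff] at htmem
    rcases htmem with rfl | rfl | rfl | rfl | rfl
    · exact ⟨0, by omega, by simp⟩
    · exact ⟨1, by omega, by norm_num⟩
    · exact ⟨2, by omega, by norm_num⟩
    · exact ⟨3, by omega, by norm_num⟩
    · exact ⟨4, by omega, by norm_num⟩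
  obtain ⟨tn, htn4, rfl⟩ := hex
  constructor
  · exact fun k => main tn htn4 k
  · intro i hi
    have hival : (((i - m).val : ℕ) : ZMod 30) = i - m := ZMod.natCast_rightInverse (i - m)
    have hieq : i = m + (((i - m).val : ℕ) : ZMod 30) := by rw [hival]; ring
    have hr30 : (i - m).val < 30 := ZMod.val_lt (i - m)
    have hr5 : 4 < (i - m).val := by
      by_contra hle
      push_neg at hle
      apply hi
      simp only [Set.mem_insert_iff, Set.mem_singleton_iff]
      rcases (by omega : (i - m).val = 0 ∨ (i - m).val = 1 ∨ (i - m).val = 2 ∨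
          (i - m).val = 3 ∨ (i - m).val = 4) with h | h | h | h | h
      · left; rw [hieq, h]; simp
      · right; left; rw [hieq, h]; norm_num
      · right; right; left; rw [hieq, h]; norm_num
      · right; right; right; left; rw [hieq, h]; norm_num
      · right; right; right; right; rw [hieq, h]; norm_num
    rw [hieq]
    exact hm tn (i - m).val htn4 hr5 (by omega)
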